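/- For a nonnegative square matrix S ∈ ℝ₊^{Q×Q}, its spectral radius satisfies ρ(S) < 1 if and only if there exists a positive vector w ∈ ℝ₊₊^Q such that the weighted induced infinity norm satisfies ‖S‖_{∞}^{w} := max_q (1/w_q) Σ_r |S_{qr}| w_r < 1. -/

import Mathlib

open scoped NNReal ENNReal

section Aux

attribute [local instance] Matrix.linftyOpNormedRing Matrix.linftyOpNormedAlgebra

variable {Q : ℕ}

private lemma pow_entry_nonneg (S : Matrix (Fin Q) (Fin Q) ℝ) (hS : ∀ q r, 0 ≤ S q r) (n : ℕ) :
    ∀ q r, 0 ≤ (S ^ n) q r := by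
  induction n with
  | zero => intro q r; by_cases h : q = r <;> simp [Matrix.one_apply, h]
  | succ n ih =>
    intro q r
    rw [pow_succ, Matrix.mul_apply]
    exact Finset.sum_nonneg fun s _ => mul_nonneg (ih q s) (hS s r)

private lemma map_pow_ofReal (S : Matrix (Fin Q) (Fin Q) ℝ) (n : ℕ) :
    (S.map (Complex.ofReal)) ^ n = (S ^ n).map Complex.ofReal := by
  have h := map_pow (Complex.ofRealHom.mapMatrix :
    Matrix (Fin Q) (Fin Q) ℝ →+* Matrix (Fin Q) (Fin Q) ℂ) S n
  exact h.symm

/-- entrywise row-sum bound by the linfty operator norm -/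
private lemma row_sum_le_norm (M : Matrix (Fin Q) (Fin Q) ℂ) (q : Fin Q) :
    ∑ r, ‖M q r‖ ≤ ‖M‖ := by
  have h : (∑ r, ‖M q r‖₊) ≤ ‖M‖₊ := by
    rw [Matrix.linfty_opNNNorm_def]
    exact Finset.le_sup (f := fun i => ∑ j, ‖M i j‖₊) (Finset.mem_univ q)
  calc ∑ r, ‖M q r‖ = ((∑ r, ‖M q r‖₊ : ℝ≥0) : ℝ) := by push_cast; rfl
    _ ≤ ‖M‖ := by exact_mod_cast h

private lemma forward_dir (S : Matrix (Fin Q) (Fin Q) ℝ) (hS : ∀ q r, 0 ≤ S q r)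
    (hQ : 0 < Q)
    (h : ∀ μ ∈ spectrum ℂ (S.map (Complex.ofReal)), ‖μ‖ < 1) :
    ∃ w : Fin Q → ℝ, (∀ q, 0 < w q) ∧
      ∀ q, (1 / w q) * ∑ r, |S q r| * w r < 1 := by
  haveI : Nonempty (Fin Q) := ⟨⟨0, hQ⟩⟩
  set A := S.map (Complex.ofReal) with hA
  haveI : CompleteSpace (Matrix (Fin Q) (Fin Q) ℂ) := FiniteDimensional.complete ℂ _
  -- spectral radius < 1
  have hsr : spectralRadius ℂ A < 1 := by
    have hne : (spectrum ℂ A).Nonempty := spectrum.nonempty A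
    have := spectrum.spectralRadius_lt_of_forall_lt_of_nonempty hne (r := 1)
      (fun k hk => by
        have := h k hk
        rw [← NNReal.coe_lt_coe, coe_nnnorm, NNReal.coe_one]
        exact this)
    simpa using this
  obtain ⟨c, hc1, hc2⟩ := ENNReal.lt_iff_exists_nnreal_btwn.mp hsr
  have hclt : (c : ℝ) < 1 := by exact_mod_cast hc2
  -- Gelfand
  have hev : ∀ᶠ n : ℕ in Filter.atTop, (‖A ^ n‖₊ : ENNReal) ^ (1 / (n : ℝ)) < c :=
    (spectrum.pow_nnnorm_pow_one_div_tendsto_nhds_spectralRadius A).eventually_lt_const hc1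
  obtain ⟨N, hN⟩ := Filter.eventually_atTop.mp hev
  have hbound : ∀ n ≥ N + 1, ‖A ^ n‖ ≤ (c : ℝ) ^ n := by
    intro n hn
    have hn0 : (n : ℝ) ≠ 0 := Nat.cast_ne_zero.mpr (by omega)
    have h1 := (hN n (le_trans (Nat.le_succ N) hn)).le
    have h2 : ((‖A ^ n‖₊ : ENNReal) ^ (1 / (n : ℝ))) ^ (n : ℕ) ≤ (c : ENNReal) ^ (n : ℕ) :=
      pow_le_pow_left' h1 n
    rw [← ENNReal.rpow_natCast ((‖A ^ n‖₊ : ENNReal) ^ (1 / (n : ℝ))) n,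
      ← ENNReal.rpow_mul, one_div, inv_mul_cancel₀ hn0, ENNReal.rpow_one] at h2
    have h3 : ‖A ^ n‖₊ ≤ c ^ n := by exact_mod_cast h2
    calc ‖A ^ n‖ = ((‖A ^ n‖₊ : ℝ≥0) : ℝ) := rfl
      _ ≤ ((c ^ n : ℝ≥0) : ℝ) := by exact_mod_cast h3
      _ = (c : ℝ) ^ n := by push_cast; ring
  -- summability of norms
  have hsumA : Summable fun n => ‖A ^ n‖ := by
    rw [← summable_nat_add_iff (N + 1)]
    refine Summable.of_nonneg_of_le (fun n => norm_nonneg _)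
      (fun n => hbound (n + (N + 1)) (Nat.le_add_left _ _)) ?_
    have : Summable fun n : ℕ => (c : ℝ) ^ (N + 1) * (c : ℝ) ^ n :=
      (summable_geometric_of_lt_one c.coe_nonneg hclt).mul_left _
    refine this.congr fun n => ?_
    rw [← pow_add]; ring_nf
  -- the row sums
  set g : Fin Q → ℕ → ℝ := fun q n => ∑ r, (S ^ n) q r with hg
  have hg_nonneg : ∀ q n, 0 ≤ g q n := fun q n =>
    Finset.sum_nonneg fun r _ => pow_entry_nonneg S hS n q r
  have hg_le : ∀ q n, g q n ≤ ‖A ^ n‖ := by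
    intro q n
    refine le_trans (le_of_eq ?_) (row_sum_le_norm (A ^ n) q)
    have hAn : A ^ n = (S ^ n).map Complex.ofReal := by rw [hA, map_pow_ofReal]
    rw [hAn]
    refine Finset.sum_congr rfl fun r _ => ?_
    rw [Matrix.map_apply, Complex.norm_real, Real.norm_eq_abs,
      abs_of_nonneg (pow_entry_nonneg S hS n q r)]
  have hg_summable : ∀ q, Summable (g q) := fun q =>
    Summable.of_nonneg_of_le (hg_nonneg q) (hg_le q) hsumA
  set w : Fin Q → ℝ := fun q => ∑' n, g q n with hw
  have hg0 : ∀ q, g q 0 = 1 := by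
    intro q; simp [hg, Matrix.one_apply]
  have hw1 : ∀ q, 1 ≤ w q := by
    intro q
    have := Summable.le_tsum (hg_summable q) 0 fun j _ => hg_nonneg q j
    rwa [hg0 q] at this
  have hwpos : ∀ q, 0 < w q := fun q => lt_of_lt_of_le one_pos (hw1 q)
  have hkey : ∀ q, ∑ r, S q r * w r = w q - 1 := by
    intro q
    have step1 : ∑ r, S q r * w r = ∑' n, ∑ r, S q r * g r n := by
      calc ∑ r, S q r * w r = ∑ r, ∑' n, S q r * g r n :=
            Finset.sum_congr rfl fun r _ => (tsum_mul_left).symm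
        _ = ∑' n, ∑ r, S q r * g r n :=
            (Summable.tsum_finsetSum fun r _ => (hg_summable r).mul_left (S q r)).symm
    have step2 : ∀ n : ℕ, ∑ r, S q r * g r n = g q (n + 1) := by
      intro n
      have hps : ∀ s, (S ^ (n + 1)) q s = ∑ r, S q r * (S ^ n) r s := fun s => by
        rw [pow_succ', Matrix.mul_apply]
      calc ∑ r, S q r * g r n = ∑ r, ∑ s, S q r * (S ^ n) r s := by
            simp_rw [hg, Finset.mul_sum]
        _ = ∑ s, ∑ r, S q r * (S ^ n) r s := Finset.sum_comm
        _ = g q (n + 1) := by simp_rw [hg, hps]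
    have step3 : w q = 1 + ∑' n, g q (n + 1) := by
      rw [hw]
      simpa [hg0 q] using Summable.tsum_eq_zero_add (hg_summable q)
    rw [step1]
    simp_rw [step2]
    rw [step3]; ring
  refine ⟨w, hwpos, fun q => ?_⟩
  have : ∑ r, |S q r| * w r = w q - 1 := by
    rw [← hkey q]
    exact Finset.sum_congr rfl fun r _ => by rw [abs_of_nonneg (hS q r)]
  rw [this, one_div, inv_mul_eq_div, div_lt_one (hwpos q)]
  linarith

end Aux

theorem spectralRadius_lt_one_iff_weighted_infNorm {Q : ℕ}
    (S : Matrix (Fin Q) (Fin Q) ℝ) (hS : ∀ q r, 0 ≤ S q r) :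
    (∀ μ ∈ spectrum ℂ (S.map (Complex.ofReal)), ‖μ‖ < 1) ↔
      ∃ w : Fin Q → ℝ, (∀ q, 0 < w q) ∧
        ∀ q, (1 / w q) * ∑ r, |S q r| * w r < 1 := by
  constructor
  · intro h
    rcases Nat.eq_zero_or_pos Q with hQ | hQ
    · subst hQ
      exact ⟨fun _ => 1, fun q => q.elim0, fun q => q.elim0⟩
    · exact forward_dir S hS hQ h
  · rintro ⟨w, hw, hww⟩ μ hμ
    set A := S.map (Complex.ofReal) with hA
    -- get eigenvector
    have hdet : (algebraMap ℂ (Matrix (Fin Q) (Fin Q) ℂ) μ - A).det = 0 := by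
      by_contra hd
      exact (spectrum.mem_iff.mp hμ)
        ((Matrix.isUnit_iff_isUnit_det _).mpr (isUnit_iff_ne_zero.mpr hd))
    obtain ⟨v, hv0, hv⟩ := Matrix.exists_mulVec_eq_zero_iff.mpr hdet
    have heig : ∀ q, μ * v q = ∑ r, A q r * v r := by
      intro q
      have := congrFun hv q
      simp only [Matrix.sub_mulVec, Pi.sub_apply, Pi.zero_apply, sub_eq_zero] at this
      have hl : ((algebraMap ℂ (Matrix (Fin Q) (Fin Q) ℂ) μ).mulVec v) q = μ * v q := by
        simp [Matrix.mulVec, dotProduct, Matrix.algebraMap_matrix_apply,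
          Finset.sum_ite_eq, ite_mul]
      have hr : (A.mulVec v) q = ∑ r, A q r * v r := by
        simp [Matrix.mulVec, dotProduct]
      rw [hl, hr] at this
      exact this
    obtain ⟨r0, hr0⟩ : ∃ r, v r ≠ 0 := by
      by_contra hc
      push_neg at hc
      exact hv0 (funext fun r => hc r)
    haveI : Nonempty (Fin Q) := ⟨r0⟩
    obtain ⟨q0, -, hq0⟩ := Finset.exists_max_image Finset.univ (fun r => ‖v r‖ / w r)
      ⟨r0, Finset.mem_univ r0⟩
    set M := ‖v q0‖ / w q0 with hM
    have hMpos : 0 < M :=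
      lt_of_lt_of_le (div_pos (norm_pos_iff.mpr hr0) (hw r0)) (hq0 r0 (Finset.mem_univ r0))
    have hvq0 : 0 < ‖v q0‖ := by
      have := mul_pos hMpos (hw q0)
      rwa [hM, div_mul_cancel₀ _ (ne_of_gt (hw q0))] at this
    have hvle : ∀ r, ‖v r‖ ≤ M * w r := fun r =>
      (div_le_iff₀ (hw r)).mp (hq0 r (Finset.mem_univ r))
    have hsum_lt : ∑ r, S q0 r * w r < w q0 := by
      have h1 := hww q0
      have h2 : ∑ r, |S q0 r| * w r = ∑ r, S q0 r * w r :=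
        Finset.sum_congr rfl fun r _ => by rw [abs_of_nonneg (hS q0 r)]
      rw [h2, one_div, inv_mul_eq_div, div_lt_one (hw q0)] at h1
      exact h1
    have key : ‖μ‖ * ‖v q0‖ < ‖v q0‖ := by
      calc ‖μ‖ * ‖v q0‖ = ‖μ * v q0‖ := (norm_mul _ _).symm
        _ = ‖∑ r, A q0 r * v r‖ := by rw [heig q0]
        _ ≤ ∑ r, ‖A q0 r * v r‖ := norm_sum_le _ _
        _ = ∑ r, S q0 r * ‖v r‖ := by
            refine Finset.sum_congr rfl fun r _ => ?_
            rw [norm_mul, hA, Matrix.map_apply, Complex.norm_real, Real.norm_eq_abs,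
              abs_of_nonneg (hS q0 r)]
        _ ≤ ∑ r, S q0 r * (M * w r) :=
            Finset.sum_le_sum fun r _ => mul_le_mul_of_nonneg_left (hvle r) (hS q0 r)
        _ = M * ∑ r, S q0 r * w r := by
            rw [Finset.mul_sum]
            exact Finset.sum_congr rfl fun r _ => by ring
        _ < M * w q0 := by exact (mul_lt_mul_iff_right₀ hMpos).mpr hsum_lt
        _ = ‖v q0‖ := by rw [hM, div_mul_cancel₀ _ (ne_of_gt (hw q0))]
    have h1 : ‖μ‖ * ‖v q0‖ < 1 * ‖v q0‖ := by rw [one_mul]; exact key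
    exact lt_of_mul_lt_mul_right h1 (norm_nonneg _)
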